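/- If the gain signed graph Υ is hyperfrustrated, then every maximal hyperbalanced edge set A is a coatom of the lattice of flats of M(Υ), with b_Σ(A) = b_Σ(E) and rk_Υ(A) = rk_Υ(E) − 1 = n − b_Σ(E). -/

import Mathlib

/- A formalization framework for gain signed graphs (Anderson–Su–Zaslavsky).
A graph may have links/loops (ordered pair of endpoints), half edges and loose
edges.  Edges carry a sign, an orientation (a sign at each end) and a gain in an
abelian group, recorded relative to the stored orientation. -/

namespace GSG

inductive EdgeEnds (V : Type*) where
  | link : V → V → EdgeEnds V
  | half : V → EdgeEnds V
  | loose : EdgeEnds V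

/-- A gain signed graph (data part; well-formedness is `Proper`). -/
structure GSGraph (V E G : Type*) [AddCommGroup G] where
  shape : E → EdgeEnds V
  sign : E → ℤˣ
  tau1 : E → ℤˣ
  tau2 : E → ℤˣ
  gain : E → G

/-- A directed step: an edge traversed forwards or backwards
(relative to the recorded order of its endpoints). -/
structure DStep (E : Type*) where
  edge : E
  fwd : Bool

/-- The reverse of a walk. -/
def revWalk {E : Type*} (W : List (DStep E)) : List (DStep E) :=
  (W.map fun d => ⟨d.edge, !d.fwd⟩).reverse

/-- The edge set of a walk. -/
def stepEdges {E : Type*} (W : List (DStep E)) : Set E := {e | e ∈ W.map DStep.edge}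

/-- An ultrawalk: a walk together with an optional initial and final half edge. -/
structure UWalk (V E : Type*) where
  firstHalf : Option E
  startV : V
  steps : List (DStep E)
  endV : V
  lastHalf : Option E

/-- The edge set of an ultrawalk. -/
def uedges {V E : Type*} (W : UWalk V E) : Set E :=
  {e | W.firstHalf = some e ∨ e ∈ W.steps.map DStep.edge ∨ W.lastHalf = some e}

namespace GSGraph

variable {V E G : Type*} [AddCommGroup G] (Υ : GSGraph V E G)

/-- Well-formedness: the two end-signs of a link or loop multiply to minus the
edge sign; half edges are negative; loose edges are positive. -/
def Proper : Prop :=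
  (∀ e v w, Υ.shape e = .link v w → Υ.tau1 e * Υ.tau2 e = - Υ.sign e) ∧
  (∀ e v, Υ.shape e = .half v → Υ.sign e = -1) ∧
  (∀ e, Υ.shape e = .loose → Υ.sign e = 1)

/-- Source vertex of a directed step (defined for links/loops). -/
def srcO (d : DStep E) : Option V :=
  match Υ.shape d.edge with
  | .link v w => some (if d.fwd then v else w)
  | _ => none

/-- Target vertex of a directed step. -/
def tgtO (d : DStep E) : Option V :=
  match Υ.shape d.edge with
  | .link v w => some (if d.fwd then w else v)
  | _ => none

/-- The orientation sign at the source end of a step. -/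
def tauSrc (d : DStep E) : ℤˣ := if d.fwd then Υ.tau1 d.edge else Υ.tau2 d.edge

/-- The orientation sign at the target end of a step. -/
def tauTgt (d : DStep E) : ℤˣ := if d.fwd then Υ.tau2 d.edge else Υ.tau1 d.edge

/-- `W` is a walk: all its edges are links or loops and consecutive steps chain. -/
def IsSteps (W : List (DStep E)) : Prop :=
  (∀ d ∈ W, ∃ v w, Υ.shape d.edge = .link v w) ∧
  List.Chain' (fun a b => Υ.tgtO a = Υ.srcO b) W

def headSrc (W : List (DStep E)) : Option V := W.head?.bind Υ.srcO

def lastTgt (W : List (DStep E)) : Option V := W.getLast?.bind Υ.tgtO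

/-- The sign of a walk: product of edge signs. -/
def walkSign (W : List (DStep E)) : ℤˣ := (W.map fun d => Υ.sign d.edge).prod

/-- The gain of a walk:
`φ(W) = −∑ φ(eᵢ)·σ(W_{0,i−1})·τ(u_{i−1},eᵢ)`, in recursive form. -/
def walkGain : List (DStep E) → G
  | [] => 0
  | d :: rest =>
      -((Υ.tauSrc d : ℤ) • Υ.gain d.edge) + (Υ.sign d.edge : ℤ) • walkGain rest

def stepVerts (W : List (DStep E)) : Set V := {v | some v ∈ W.map Υ.srcO}

def pathVerts (W : List (DStep E)) : Set V :=
  Υ.stepVerts W ∪ {v | some v = Υ.lastTgt W}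

/-- `W` is a (possibly empty) walk from `u` to `v`. -/
def FromTo (W : List (DStep E)) (u v : V) : Prop :=
  (W = [] → u = v) ∧ (W ≠ [] → Υ.headSrc W = some u ∧ Υ.lastTgt W = some v)

/-- A closed walk tracing a circle: no repeated edges, no repeated vertices. -/
def IsCircleWalk (W : List (DStep E)) : Prop :=
  W ≠ [] ∧ Υ.IsSteps W ∧ Υ.lastTgt W = Υ.headSrc W ∧
  (W.map DStep.edge).Nodup ∧ (W.map Υ.srcO).Nodup

/-- A walk tracing a path: no repeated edges or vertices. -/
def IsPathWalk (W : List (DStep E)) : Prop :=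
  Υ.IsSteps W ∧ (W.map DStep.edge).Nodup ∧
  (W.map Υ.srcO ++ [Υ.lastTgt W]).Nodup

/-- Well-formedness of an ultrawalk. -/
def IsUWalk (W : UWalk V E) : Prop :=
  Υ.IsSteps W.steps ∧ Υ.FromTo W.steps W.startV W.endV ∧
  (∀ e, W.firstHalf = some e → Υ.shape e = .half W.startV) ∧
  (∀ e, W.lastHalf = some e → Υ.shape e = .half W.endV)

/-- The gain of an ultrawalk:
`φ(W) = τ(u₀,e₀)φ(e₀) + φ(W₀ₗ) − φ(e_{l+1})·σ(W₀ₗ)·τ(u_l,e_{l+1})`. -/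
def ugain (W : UWalk V E) : G :=
  (match W.firstHalf with
   | some e => (Υ.tau1 e : ℤ) • Υ.gain e
   | none => 0)
  + Υ.walkGain W.steps
  + (match W.lastHalf with
     | some e => -(((Υ.walkSign W.steps * Υ.tau1 e : ℤˣ) : ℤ) • Υ.gain e)
     | none => 0)

/-- A circuit walk around a positive circle. -/
def IsPosCircleWalk (W : UWalk V E) : Prop :=
  W.firstHalf = none ∧ W.lastHalf = none ∧ Υ.IsCircleWalk W.steps ∧
  Υ.walkSign W.steps = 1 ∧ Υ.headSrc W.steps = some W.startV ∧ W.endV = W.startV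

/-- A circuit walk around a handcuff whose two figures (circles or half edges)
have signs `s₁` and `s₂` (a half-edge figure counts as sign `-1`).  The three
cases: circle–circle, half-edge–circle, half-edge–half-edge. -/
def IsHandcuffWalk (s₁ s₂ : ℤˣ) (W : UWalk V E) : Prop :=
  (∃ W₁ P W₂ u₁ u₂,
    W.firstHalf = none ∧ W.lastHalf = none ∧
    W.steps = W₁ ++ P ++ W₂ ++ revWalk P ∧
    Υ.IsSteps W.steps ∧
    Υ.IsCircleWalk W₁ ∧ Υ.walkSign W₁ = s₁ ∧ Υ.headSrc W₁ = some u₁ ∧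
    Υ.IsCircleWalk W₂ ∧ Υ.walkSign W₂ = s₂ ∧ Υ.headSrc W₂ = some u₂ ∧
    Υ.IsPathWalk P ∧ Υ.FromTo P u₁ u₂ ∧
    W.startV = u₁ ∧ W.endV = u₁ ∧
    (∀ x, x ∈ Υ.stepVerts W₁ → x ∈ Υ.stepVerts W₂ → P = [] ∧ x = u₁) ∧
    (∀ x, x ∈ Υ.pathVerts P →
      (x ∈ Υ.stepVerts W₁ → x = u₁) ∧ (x ∈ Υ.stepVerts W₂ → x = u₂)) ∧
    ((W₁ ++ P ++ W₂).map DStep.edge).Nodup) ∨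
  (∃ e₁ P W₂ u₂,
    W.firstHalf = some e₁ ∧ W.lastHalf = some e₁ ∧
    Υ.shape e₁ = .half W.startV ∧ W.endV = W.startV ∧ s₁ = -1 ∧
    W.steps = P ++ W₂ ++ revWalk P ∧ Υ.IsSteps W.steps ∧
    Υ.IsCircleWalk W₂ ∧ Υ.walkSign W₂ = s₂ ∧ Υ.headSrc W₂ = some u₂ ∧
    Υ.IsPathWalk P ∧ Υ.FromTo P W.startV u₂ ∧
    (∀ x, x ∈ Υ.pathVerts P → x ∈ Υ.stepVerts W₂ → x = u₂) ∧
    (W.startV ∈ Υ.stepVerts W₂ → P = []) ∧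
    ((P ++ W₂).map DStep.edge).Nodup) ∨
  (∃ e₁ e₂,
    W.firstHalf = some e₁ ∧ W.lastHalf = some e₂ ∧ e₁ ≠ e₂ ∧
    Υ.shape e₁ = .half W.startV ∧ Υ.shape e₂ = .half W.endV ∧
    s₁ = -1 ∧ s₂ = -1 ∧
    Υ.IsPathWalk W.steps ∧ Υ.FromTo W.steps W.startV W.endV)

/-- A circuit walk of a sign circuit: a positive circle, or a handcuff of two
negative figures (loose-edge circuits are handled separately). -/
def IsSignCircuitWalk (W : UWalk V E) : Prop :=
  Υ.IsPosCircleWalk W ∨ Υ.IsHandcuffWalk (-1) (-1) W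

/-- `C` is a sign circuit: a loose edge, a positive circle, or a handcuff of
two negative figures joined by a minimal path. -/
def SignCircuit (C : Set E) : Prop :=
  (∃ e, Υ.shape e = .loose ∧ C = {e}) ∨
  (∃ W : UWalk V E, Υ.IsSignCircuitWalk W ∧ uedges W = C)

/-- `C` is neutral: every way of computing its gain gives `0`. -/
def NeutralOn (C : Set E) : Prop :=
  (∀ e, Υ.shape e = .loose → C = {e} → Υ.gain e = 0) ∧
  (∀ W : UWalk V E, Υ.IsSignCircuitWalk W → uedges W = C → Υ.ugain W = 0)

/-- An edge set is hyperbalanced if every sign circuit contained in it is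
neutral. -/
def Hyperbalanced (S : Set E) : Prop :=
  ∀ C, C ⊆ S → Υ.SignCircuit C → Υ.NeutralOn C

/-- Adjacency through an edge of `S`. -/
def joined (S : Set E) (a b : V) : Prop :=
  ∃ e ∈ S, Υ.shape e = .link a b ∨ Υ.shape e = .link b a

/-- Connectivity in the spanning subgraph `(V, S)`. -/
def conn (S : Set E) : V → V → Prop := Relation.ReflTransGen (Υ.joined S)

/-- The vertex component of `v` in `(V, S)`. -/
def comp (S : Set E) (v : V) : Set V := {w | Υ.conn S v w}

/-- Incidence of an edge with a vertex. -/
def touches (e : E) (v : V) : Prop :=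
  match Υ.shape e with
  | .link a b => v = a ∨ v = b
  | .half a => v = a
  | .loose => False

/-- The component of `v` in `(V,S)` is sign-balanced: it contains no half edge
and no negative circle. -/
def BalancedAt (S : Set E) (v : V) : Prop :=
  (∀ e ∈ S, ∀ u, Υ.shape e = .half u → ¬ Υ.conn S v u) ∧
  (∀ W : List (DStep E), Υ.IsCircleWalk W → (∀ d ∈ W, d.edge ∈ S) →
     (∃ u, Υ.headSrc W = some u ∧ Υ.conn S v u) → Υ.walkSign W = 1)

/-- Number of sign-balanced components of `(V,S)`. -/
noncomputable def bBal (S : Set E) : ℕ :=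
  Nat.card {X : Set V // ∃ v, X = Υ.comp S v ∧ Υ.BalancedAt S v}

/-- Number of components of `(V,S)`. -/
noncomputable def nComp (S : Set E) : ℕ :=
  Nat.card {X : Set V // ∃ v, X = Υ.comp S v}

/-- `δ(S)`: 0 if `S` is hyperbalanced, 1 if hyperfrustrated. -/
noncomputable def delta (S : Set E) : ℕ := by
  classical exact if Υ.Hyperbalanced S then 0 else 1

/-- The rank function of the matroid `M(Υ)`:
`rk(S) = n − b_Σ(S) + δ_Υ(S)`. -/
noncomputable def rk [Fintype V] (S : Set E) : ℕ :=
  Fintype.card V - Υ.bBal S + Υ.delta S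

/-- Matroid closure with respect to `rk`. -/
noncomputable def cl [Fintype V] (S : Set E) : Set E :=
  {e | Υ.rk (insert e S) = Υ.rk S}

/-- Two edges of `S` lie in the same edge component of `S`. -/
def econn (S : Set E) (e f : E) : Prop :=
  e ∈ S ∧ f ∈ S ∧ (e = f ∨ ∃ v w, Υ.touches e v ∧ Υ.touches f w ∧ Υ.conn S v w)

/-- `C` is an edge component of `S`. -/
def EdgeComponent (S C : Set E) : Prop := ∃ e ∈ S, C = {f | Υ.econn S e f}

/-- Sign switching by `ζ : V → {±1}`. -/
def signSwitch (ζ : V → ℤˣ) : GSGraph V E G where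
  shape := Υ.shape
  sign := fun e =>
    match Υ.shape e with
    | .link v w => ζ v * Υ.sign e * ζ w
    | _ => Υ.sign e
  tau1 := fun e =>
    match Υ.shape e with
    | .link v _ => ζ v * Υ.tau1 e
    | .half v => ζ v * Υ.tau1 e
    | .loose => Υ.tau1 e
  tau2 := fun e =>
    match Υ.shape e with
    | .link _ w => ζ w * Υ.tau2 e
    | _ => Υ.tau2 e
  gain := Υ.gain

/-- Gain switching by `θ : V → G`:
`φ^θ(e_{vw}) = τ(v,e)θ(v) + φ(e) + τ(w,e)θ(w)`. -/
def gainSwitch (θ : V → G) : GSGraph V E G where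
  shape := Υ.shape
  sign := Υ.sign
  tau1 := Υ.tau1
  tau2 := Υ.tau2
  gain := fun e =>
    match Υ.shape e with
    | .link v w => (Υ.tau1 e : ℤ) • θ v + Υ.gain e + (Υ.tau2 e : ℤ) • θ w
    | .half v => (Υ.tau1 e : ℤ) • θ v + Υ.gain e
    | .loose => Υ.gain e

/-- Reorientation by `ρ : E → {±1}`: negates the end signs and the gain of each
edge with `ρ e = -1`. -/
def reorient (ρ : E → ℤˣ) : GSGraph V E G where
  shape := Υ.shape
  sign := Υ.sign
  tau1 := fun e => ρ e * Υ.tau1 e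
  tau2 := fun e => ρ e * Υ.tau2 e
  gain := fun e => (ρ e : ℤ) • Υ.gain e

end GSGraph

end GSG

namespace GSG

namespace GSGraph
variable {V E G : Type*} [AddCommGroup G] (Υ : GSGraph V E G)

/-- A walk in the edge set `S` from `u` to `w`, inductive form. -/
inductive Wlk (S : Set E) : V → List (DStep E) → V → Prop
  | nil (u : V) : Wlk S u [] u
  | cons {d : DStep E} {u p w : V} {l : List (DStep E)}
      (he : d.edge ∈ S) (hs : Υ.srcO d = some u) (ht : Υ.tgtO d = some p)
      (hl : Wlk S p l w) : Wlk S u (d :: l) w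

variable {Υ}
variable {S T : Set E} {u w x p : V} {W W₁ W₂ : List (DStep E)}

theorem Wlk.mono (hST : S ⊆ T) (h : Υ.Wlk S u W w) : Υ.Wlk T u W w := by
  induction h with
  | nil => exact .nil _
  | cons he hs ht _ ih => exact .cons (hST he) hs ht ih

theorem Wlk.append (h₁ : Υ.Wlk S u W₁ w) (h₂ : Υ.Wlk S w W₂ x) :
    Υ.Wlk S u (W₁ ++ W₂) x := by
  induction h₁ with
  | nil => exact h₂
  | cons he hs ht _ ih => exact .cons he hs ht (ih h₂)

theorem Wlk.split (h : Υ.Wlk S u (W₁ ++ W₂) w) :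
    ∃ m, Υ.Wlk S u W₁ m ∧ Υ.Wlk S m W₂ w := by
  induction W₁ generalizing u with
  | nil => exact ⟨u, .nil _, h⟩
  | cons d l ih =>
      cases h with
      | cons he hs ht hl =>
          obtain ⟨m, h1, h2⟩ := ih hl
          exact ⟨m, .cons he hs ht h1, h2⟩

theorem srcO_flip (d : DStep E) : Υ.srcO ⟨d.edge, !d.fwd⟩ = Υ.tgtO d := by
  unfold GSGraph.srcO GSGraph.tgtO
  cases h : Υ.shape d.edge <;> cases hf : d.fwd <;> simp

theorem tgtO_flip (d : DStep E) : Υ.tgtO ⟨d.edge, !d.fwd⟩ = Υ.srcO d := by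
  unfold GSGraph.srcO GSGraph.tgtO
  cases h : Υ.shape d.edge <;> cases hf : d.fwd <;> simp

theorem Wlk.rev (h : Υ.Wlk S u W w) : Υ.Wlk S w (revWalk W) u := by
  induction h with
  | nil => exact .nil _
  | cons he hs ht hl ih =>
      rename_i d u' p' w' l
      have : revWalk (d :: l) = revWalk l ++ [⟨d.edge, !d.fwd⟩] := by
        simp [revWalk]
      rw [this]
      exact ih.append (.cons he (by rw [srcO_flip]; exact ht)
        (by rw [tgtO_flip]; exact hs) (.nil _))

theorem Wlk.edges_mem (h : Υ.Wlk S u W w) : ∀ d ∈ W, d.edge ∈ S := by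
  induction h with
  | nil => simp
  | cons he hs ht _ ih => intro d hd; rcases List.mem_cons.1 hd with rfl | hd
                          · exact he
                          · exact ih d hd

theorem step_endpoints {d : DStep E} (hs : Υ.srcO d = some u) (ht : Υ.tgtO d = some p) :
    Υ.shape d.edge = .link u p ∨ Υ.shape d.edge = .link p u := by
  unfold GSGraph.srcO at hs
  unfold GSGraph.tgtO at ht
  rcases hsh : Υ.shape d.edge with ⟨a, b⟩ | _ | _ <;> rw [hsh] at hs ht <;>
    simp at hs ht
  cases hf : d.fwd <;> rw [hf] at hs ht <;> simp at hs ht <;>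
    subst hs <;> subst ht <;> simp

theorem Wlk.conn (h : Υ.Wlk S u W w) : Υ.conn S u w := by
  induction h with
  | nil => exact .refl
  | cons he hs ht _ ih =>
      exact .trans (Relation.ReflTransGen.single ⟨_, he, step_endpoints hs ht⟩) ih

theorem joined_symm : Symmetric (Υ.joined S) := by
  intro a b ⟨e, he, h⟩
  exact ⟨e, he, h.symm⟩

theorem conn_symm (h : Υ.conn S u w) : Υ.conn S w u :=
  @Std.Symm.symm _ _ (@Relation.ReflTransGen.stdSymm _ _ ⟨fun _ _ h => joined_symm h⟩) _ _ h

theorem conn_mono (hST : S ⊆ T) (h : Υ.conn S u w) : Υ.conn T u w :=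
  Relation.ReflTransGen.mono (r := Υ.joined S) (p := Υ.joined T) (fun a b (hab : Υ.joined S a b) =>
    show Υ.joined T a b from let ⟨e, he, h'⟩ := hab; ⟨e, hST he, h'⟩) _ _ h

/-- From connectivity, a walk exists. -/
theorem conn_wlk (h : Υ.conn S u w) : ∃ W, Υ.Wlk S u W w := by
  induction h with
  | refl => exact ⟨[], .nil _⟩
  | tail _ hj ih =>
      obtain ⟨W, hW⟩ := ih
      rename_i b c _
      obtain ⟨e, he, hsh | hsh⟩ := hj
      · exact ⟨W ++ [⟨e, true⟩], hW.append (.cons he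
          (by unfold GSGraph.srcO; rw [hsh]; simp) (by unfold GSGraph.tgtO; rw [hsh]; simp)
          (.nil _))⟩
      · exact ⟨W ++ [⟨e, false⟩], hW.append (.cons he
          (by unfold GSGraph.srcO; rw [hsh]; simp) (by unfold GSGraph.tgtO; rw [hsh]; simp)
          (.nil _))⟩

end GSGraph
section part2
namespace GSGraph
variable {V E G : Type*} [AddCommGroup G] {Υ : GSGraph V E G}
variable {S T : Set E} {u w x p : V} {W W₁ W₂ : List (DStep E)}

theorem walkSign_append (W₁ W₂ : List (DStep E)) :
    Υ.walkSign (W₁ ++ W₂) = Υ.walkSign W₁ * Υ.walkSign W₂ := by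
  simp [GSGraph.walkSign]

theorem walkSign_nil : Υ.walkSign ([] : List (DStep E)) = 1 := rfl

theorem walkSign_cons (d : DStep E) (l : List (DStep E)) :
    Υ.walkSign (d :: l) = Υ.sign d.edge * Υ.walkSign l := by
  simp [GSGraph.walkSign]

theorem getLast?_cons_ne {α : Type*} (d : α) {l : List α} (h : l ≠ []) :
    (d :: l).getLast? = l.getLast? := by
  cases l with
  | nil => exact absurd rfl h
  | cons a t => simp [List.getLast?]

theorem walkSign_rev (W : List (DStep E)) : Υ.walkSign (revWalk W) = Υ.walkSign W := by
  simp [GSGraph.walkSign, revWalk, List.map_reverse, List.prod_reverse, List.map_map,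
    Function.comp_def]

theorem Wlk.headSrc_eq (h : Υ.Wlk S u W w) (hne : W ≠ []) : Υ.headSrc W = some u := by
  cases h with
  | nil => exact absurd rfl hne
  | cons he hs ht hl => simp [GSGraph.headSrc, hs]

theorem Wlk.lastTgt_eq (h : Υ.Wlk S u W w) (hne : W ≠ []) : Υ.lastTgt W = some w := by
  induction h with
  | nil => exact absurd rfl hne
  | cons he hs ht hl ih =>
      rename_i d u' p' w' l
      rcases eq_or_ne l [] with rfl | hl'
      · cases hl; simp [GSGraph.lastTgt, ht]
      · rw [GSGraph.lastTgt, getLast?_cons_ne _ hl', ← GSGraph.lastTgt]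
        exact ih hl'

theorem Wlk.eq_of_nil (h : Υ.Wlk S u [] w) : u = w := by cases h; rfl

theorem Wlk.fromTo (h : Υ.Wlk S u W w) : Υ.FromTo W u w :=
  ⟨fun he => by subst he; exact h.eq_of_nil,
   fun hne => ⟨h.headSrc_eq hne, h.lastTgt_eq hne⟩⟩

theorem Wlk.isSteps (h : Υ.Wlk S u W w) : Υ.IsSteps W := by
  induction h with
  | nil => exact ⟨by simp, List.isChain_nil⟩
  | cons he hs ht hl ih =>
      rename_i d u' p' w' l
      constructor
      · intro d' hd'
        rcases List.mem_cons.1 hd' with rfl | hd'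
        · rcases step_endpoints hs ht with h' | h'
          · exact ⟨_, _, h'⟩
          · exact ⟨_, _, h'⟩
        · exact ih.1 d' hd'
      · refine List.isChain_cons.2 ⟨?_, ih.2⟩
        intro y hy
        rw [ht]
        cases hl with
        | nil => simp at hy
        | cons he2 hs2 ht2 hl2 =>
            simp at hy; subst hy; exact hs2.symm

/-- Conversion from `IsSteps`+`FromTo` to `Wlk`. -/
theorem wlk_of_isSteps (hS : ∀ d ∈ W, d.edge ∈ S) (hst : Υ.IsSteps W)
    (hft : Υ.FromTo W u w) : Υ.Wlk S u W w := by
  induction W generalizing u with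
  | nil => rw [hft.1 rfl]; exact .nil _
  | cons d l ih =>
      obtain ⟨hhead, hlast⟩ := hft.2 (by simp)
      obtain ⟨a, b, hsh⟩ := hst.1 d (by simp)
      have hs : Υ.srcO d = some u := by
        simpa [GSGraph.headSrc] using hhead
      have ht : ∃ t, Υ.tgtO d = some t := by
        unfold GSGraph.tgtO; rw [hsh]; exact ⟨_, rfl⟩
      obtain ⟨t, ht⟩ := ht
      refine .cons (hS d (by simp)) hs ht ?_
      rcases eq_or_ne l [] with rfl | hl'
      · have : Υ.lastTgt [d] = some t := by simp [GSGraph.lastTgt, ht]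
        rw [hlast] at this
        simp at this
        rw [← this]
        exact .nil _
      · refine ih (fun d' hd' => hS d' (by simp [hd'])) ⟨fun d' hd' => hst.1 d' (by simp [hd']),
          (List.isChain_cons.1 hst.2).2⟩ ⟨fun h => absurd h hl', fun _ => ⟨?_, ?_⟩⟩
        · have := (List.isChain_cons.1 hst.2).1 (l.head hl') (by simp [List.head?_eq_head hl'])
          rw [ht] at this
          simpa [GSGraph.headSrc, List.head?_eq_head hl'] using this.symm
        · rw [← hlast, GSGraph.lastTgt, GSGraph.lastTgt, getLast?_cons_ne _ hl']

/-- All source/target vertices of a walk are connected to its start. -/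
theorem Wlk.verts_conn (h : Υ.Wlk S u W w) :
    ∀ d ∈ W, ∀ z, (Υ.srcO d = some z ∨ Υ.tgtO d = some z) → Υ.conn S u z := by
  induction h with
  | nil => simp
  | cons he hs ht hl ih =>
      rename_i d u' p' w' l
      intro d' hd' z hz
      have hstep : Υ.conn S u' p' :=
        Relation.ReflTransGen.single ⟨_, he, step_endpoints hs ht⟩
      rcases List.mem_cons.1 hd' with rfl | hd'
      · rcases hz with hz | hz
        · rw [hs] at hz; cases hz; exact .refl
        · rw [ht] at hz; cases hz; exact hstep
      · exact .trans hstep (ih d' hd' z hz)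

/-- List helper: a non-nodup list decomposes with a repeated element. -/
theorem exists_dup_decomp {α : Type*} {l : List α} (h : ¬ l.Nodup) :
    ∃ (a : α) (l₁ l₂ l₃ : List α), l = l₁ ++ a :: (l₂ ++ a :: l₃) := by
  induction l with
  | nil => exact absurd List.nodup_nil h
  | cons x t ih =>
      by_cases hx : x ∈ t
      · obtain ⟨s, t', rfl⟩ := List.append_of_mem hx
        exact ⟨x, [], s, t', by simp⟩
      · have : ¬ t.Nodup := fun hn => h (List.nodup_cons.2 ⟨hx, hn⟩)
        obtain ⟨a, l₁, l₂, l₃, rfl⟩ := ih this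
        exact ⟨a, x :: l₁, l₂, l₃, by simp⟩

theorem nodup_no_dup_decomp {α : Type*} {a : α} {l₁ l₂ l₃ : List α}
    (h : (l₁ ++ a :: (l₂ ++ a :: l₃)).Nodup) : False := by
  simp [List.nodup_append] at h

/-- Pull a decomposition of the mapped list back to the original list. -/
theorem map_decomp {α β : Type*} {f : α → β} {l : List α} {a : β} {L₁ L₂ L₃ : List β}
    (h : l.map f = L₁ ++ a :: (L₂ ++ a :: L₃)) :
    ∃ (d₁ d₂ : α) (U₁ U₂ U₃ : List α), l = U₁ ++ d₁ :: (U₂ ++ d₂ :: U₃) ∧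
      f d₁ = a ∧ f d₂ = a ∧ U₁.map f = L₁ ∧ U₂.map f = L₂ ∧ U₃.map f = L₃ := by
  rw [List.map_eq_append_iff] at h
  obtain ⟨U₁, r₁, rfl, h₁, h₂⟩ := h
  rw [List.map_eq_cons_iff] at h₂
  obtain ⟨d₁, r₂, rfl, hd₁, h₃⟩ := h₂
  rw [List.map_eq_append_iff] at h₃
  obtain ⟨U₂, r₃, rfl, h₄, h₅⟩ := h₃
  rw [List.map_eq_cons_iff] at h₅
  obtain ⟨d₂, U₃, rfl, hd₂, h₆⟩ := h₅
  exact ⟨d₁, d₂, U₁, U₂, U₃, rfl, hd₁, hd₂, h₁, h₄, h₆⟩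

end GSGraph
end part2

section part3
namespace GSGraph
variable {V E G : Type*} [AddCommGroup G] {Υ : GSGraph V E G}
variable {S : Set E} {u v w x p : V} {W : List (DStep E)}

theorem Wlk.cons_elim {d : DStep E} {l : List (DStep E)} (h : Υ.Wlk S u (d :: l) w) :
    ∃ p, d.edge ∈ S ∧ Υ.srcO d = some u ∧ Υ.tgtO d = some p ∧ Υ.Wlk S p l w := by
  cases h
  exact ⟨_, ‹_›, ‹_›, ‹_›, ‹_›⟩

theorem nodup_map_src_neq {U₁ U₂ U₃ : List (DStep E)} {d₁ d₂ : DStep E}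
    (hnd : ((U₁ ++ d₁ :: (U₂ ++ d₂ :: U₃)).map Υ.srcO).Nodup) :
    Υ.srcO d₁ ≠ Υ.srcO d₂ := by
  intro h
  apply nodup_no_dup_decomp (a := Υ.srcO d₁) (l₁ := U₁.map Υ.srcO) (l₂ := U₂.map Υ.srcO)
    (l₃ := U₃.map Υ.srcO)
  nth_rewrite 2 [h]
  simpa using hnd

/-- Balanced components carry no negative closed walks. -/
theorem no_neg_closed {v : V} (hbal : Υ.BalancedAt S v) :
    ∀ (n : ℕ) (W : List (DStep E)) (u : V), W.length ≤ n → Υ.Wlk S u W u →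
      Υ.conn S v u → Υ.walkSign W = 1 := by
  intro n
  induction n with
  | zero =>
      intro W u hlen hwlk _
      rw [List.length_eq_zero_iff.1 (Nat.le_zero.1 hlen)]
      rfl
  | succ n ih =>
      intro W u hlen hwlk hconn
      rcases eq_or_ne W [] with rfl | hne
      · rfl
      by_cases hnd : (W.map Υ.srcO).Nodup
      · by_cases hed : (W.map DStep.edge).Nodup
        · -- a genuine circle: apply balance
          exact hbal.2 W ⟨hne, hwlk.isSteps,
            by rw [hwlk.lastTgt_eq hne, hwlk.headSrc_eq hne], hed, hnd⟩
            (fun d hd => hwlk.edges_mem d hd) ⟨u, hwlk.headSrc_eq hne, hconn⟩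
        · -- a repeated edge: it must be traversed twice in a row; cancel it
          obtain ⟨g, L₁, L₂, L₃, hmap⟩ := exists_dup_decomp hed
          obtain ⟨d₁, d₂, U₁, U₂, U₃, rfl, he₁, he₂, -, -, -⟩ := map_decomp hmap
          obtain ⟨m, hU₁, hrest⟩ := hwlk.split
          obtain ⟨p₁, hgS, hs₁, ht₁, hl⟩ := hrest.cons_elim
          obtain ⟨q, hU₂, hrest₂⟩ := hl.split
          obtain ⟨r₁, hgS₂, hs₂, ht₂, hU₃⟩ := hrest₂.cons_elim
          have hmq : m ≠ q := by
            intro h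
            exact nodup_map_src_neq hnd (by rw [hs₁, hs₂, h])
          have hep₁ := step_endpoints hs₁ ht₁
          have hep₂ := step_endpoints hs₂ ht₂
          rw [he₂, ← he₁] at hep₂
          have hqr : q = p₁ ∧ r₁ = m := by
            rcases hep₁ with h1 | h1 <;> rcases hep₂ with h2 | h2 <;>
              rw [h1] at h2 <;> cases h2 <;> first | (exact absurd rfl hmq) | exact ⟨rfl, rfl⟩
          obtain ⟨rfl, rfl⟩ := hqr
          have hU₂nil : U₂ = [] := by
            cases hU₂ with
            | nil => rfl
            | cons heS hsy hty hrest3 =>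
                exfalso
                rename_i dy py ly
                apply nodup_no_dup_decomp (a := Υ.srcO dy)
                  (l₁ := U₁.map Υ.srcO ++ [Υ.srcO d₁]) (l₂ := ly.map Υ.srcO)
                  (l₃ := U₃.map Υ.srcO)
                have h5 : Υ.srcO dy = Υ.srcO d₂ := by rw [hsy, hs₂]
                nth_rewrite 2 [h5]
                simpa using hnd
          subst hU₂nil
          have hwlk' : Υ.Wlk S u (U₁ ++ U₃) u := hU₁.append hU₃
          have hlen' : (U₁ ++ U₃).length ≤ n := by
            simp at hlen ⊢; omega
          have hsign' := ih _ _ hlen' hwlk' hconn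
          have hkey : Υ.walkSign (U₁ ++ d₁ :: (([] : List (DStep E)) ++ d₂ :: U₃)) =
              Υ.walkSign (U₁ ++ U₃) * (Υ.sign g * Υ.sign g) := by
            simp only [walkSign_append, walkSign_cons, walkSign_nil, he₁, he₂,
              List.nil_append, one_mul]
            ac_rfl
          rw [hkey, hsign', Int.units_mul_self, mul_one]
      · -- a repeated vertex: split into two shorter closed walks
        obtain ⟨a, L₁, L₂, L₃, hmap⟩ := exists_dup_decomp hnd
        obtain ⟨d₁, d₂, U₁, U₂, U₃, rfl, he₁, he₂, -, -, -⟩ := map_decomp hmap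
        obtain ⟨m, hU₁, hrest⟩ := hwlk.split
        obtain ⟨p₁, hgS, hs₁, ht₁, hl⟩ := hrest.cons_elim
        obtain ⟨q, hU₂, hrest₂⟩ := hl.split
        obtain ⟨r₁, hgS₂, hs₂, ht₂, hU₃⟩ := hrest₂.cons_elim
        have hqm : q = m := by
          have h6 : Υ.srcO d₁ = Υ.srcO d₂ := by rw [he₁, he₂]
          rw [hs₁, hs₂] at h6
          exact (Option.some_injective _ h6.symm)
        subst hqm
        have hWa : Υ.Wlk S q (d₁ :: U₂) q := .cons hgS hs₁ ht₁ hU₂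
        have hWb : Υ.Wlk S u (U₁ ++ d₂ :: U₃) u :=
          hU₁.append (.cons hgS₂ hs₂ ht₂ hU₃)
        have hconnm : Υ.conn S v q := .trans hconn hU₁.conn
        have hlena : (d₁ :: U₂).length ≤ n := by simp at hlen ⊢; omega
        have hlenb : (U₁ ++ d₂ :: U₃).length ≤ n := by simp at hlen ⊢; omega
        have hsa := ih _ _ hlena hWa hconnm
        have hsb := ih _ _ hlenb hWb hconn
        have hkey : Υ.walkSign (U₁ ++ d₁ :: (U₂ ++ d₂ :: U₃)) =
            Υ.walkSign (d₁ :: U₂) * Υ.walkSign (U₁ ++ d₂ :: U₃) := by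
          simp only [walkSign_append, walkSign_cons]
          ac_rfl
        rw [hkey, hsa, hsb, mul_one]

end GSGraph
end part3
section part4
namespace GSGraph
variable {V E G : Type*} [AddCommGroup G] {Υ : GSGraph V E G}
variable {A S T : Set E} {u v w x p : V} {W W₁ W₂ : List (DStep E)}

theorem units_eq_of_mul_eq_one {s t : ℤˣ} (h : s * t = 1) : s = t := by
  have := Int.units_mul_self t
  calc s = s * (t * t) := by rw [this, mul_one]
    _ = (s * t) * t := by rw [mul_assoc]
    _ = t := by rw [h, one_mul]

theorem wlk_sign_unique {v : V} (hbal : Υ.BalancedAt A v)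
    (h₁ : Υ.Wlk A v W₁ u) (h₂ : Υ.Wlk A v W₂ u) :
    Υ.walkSign W₁ = Υ.walkSign W₂ := by
  have hcl : Υ.Wlk A v (W₁ ++ revWalk W₂) v := h₁.append h₂.rev
  have h1 := no_neg_closed hbal (W₁ ++ revWalk W₂).length _ _ le_rfl hcl .refl
  rw [walkSign_append, walkSign_rev] at h1
  exact units_eq_of_mul_eq_one h1

variable (Υ)

/-- The sign potential of a balanced component. -/
noncomputable def zeta (A : Set E) (v u : V) : ℤˣ := by
  classical exact if h : ∃ W, Υ.Wlk A v W u then Υ.walkSign h.choose else 1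

variable {Υ}

theorem zeta_eq {v u : V} (hbal : Υ.BalancedAt A v) (hW : Υ.Wlk A v W u) :
    Υ.zeta A v u = Υ.walkSign W := by
  have h : ∃ W', Υ.Wlk A v W' u := ⟨W, hW⟩
  rw [GSGraph.zeta, dif_pos h]
  exact wlk_sign_unique hbal h.choose_spec hW

/-- Telescoping: a walk whose edges all satisfy the potential equation has
sign given by the potential difference. -/
theorem wlk_sign_potential {ζ : V → ℤˣ}
    (h : Υ.Wlk T u W w)
    (hprop : ∀ d ∈ W, ∀ c c', Υ.srcO d = some c → Υ.tgtO d = some c' →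
      Υ.sign d.edge = ζ c * ζ c') :
    Υ.walkSign W = ζ u * ζ w := by
  induction h with
  | nil => exact (Int.units_mul_self _).symm
  | cons he hs ht hl ih =>
      rename_i d u' p' w' l
      rw [walkSign_cons, hprop d (by simp) u' p' hs ht,
        ih (fun d' hd' => hprop d' (by simp [hd'])),
        show (ζ u' * ζ p') * (ζ p' * ζ w') = ζ u' * ((ζ p' * ζ p') * ζ w') by ac_rfl,
        Int.units_mul_self, one_mul]

end GSGraph
end part4
section part5a
namespace GSGraph
variable {V E G : Type*} [AddCommGroup G] {Υ : GSGraph V E G}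
variable {A S T : Set E} {e : E} {u v w x m t : V} {W W₁ W₂ P : List (DStep E)}

theorem wlk_avoid (h : Υ.Wlk (insert e A) u W w) (hno : e ∉ W.map DStep.edge) :
    Υ.Wlk A u W w := by
  induction h with
  | nil => exact .nil _
  | cons he hs ht hl ih =>
      rename_i d u' p' w' l
      simp only [List.map_cons, List.mem_cons] at hno
      push_neg at hno
      rcases he with he | he
      · exact absurd he.symm hno.1
      · exact .cons he hs ht (ih hno.2)

theorem revWalk_edges (P : List (DStep E)) :
    (revWalk P).map DStep.edge = (P.map DStep.edge).reverse := by
  simp [revWalk, List.map_reverse, List.map_map, Function.comp_def]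

theorem wlk_closed (hc : Υ.IsCircleWalk W) (hh : Υ.headSrc W = some u)
    (hsub : ∀ d ∈ W, d.edge ∈ S) : Υ.Wlk S u W u :=
  wlk_of_isSteps hsub hc.2.1
    ⟨fun h => absurd h hc.1, fun _ => ⟨hh, by rw [hc.2.2.1]; exact hh⟩⟩

theorem split_at_edge (h : Υ.Wlk (insert e A) u W w)
    (hnd : (W.map DStep.edge).Nodup) (heW : e ∈ W.map DStep.edge) :
    ∃ (d : DStep E) (m t : V) (pre post : List (DStep E)),
      W = pre ++ d :: post ∧ d.edge = e ∧
      Υ.srcO d = some m ∧ Υ.tgtO d = some t ∧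
      Υ.Wlk A u pre m ∧ Υ.Wlk A t post w := by
  obtain ⟨d, hdW, hde⟩ := List.mem_map.1 heW
  obtain ⟨pre, post, rfl⟩ := List.append_of_mem hdW
  obtain ⟨m', hpre, hrest⟩ := h.split
  obtain ⟨t', hdS, hs, ht, hpost⟩ := hrest.cons_elim
  have hmid : e ∉ pre.map DStep.edge ++ post.map DStep.edge := by
    have := hnd
    rw [List.map_append, List.map_cons, hde] at this
    exact (List.nodup_cons.1 (List.nodup_middle.1 this)).1
  simp only [List.mem_append] at hmid
  push_neg at hmid
  exact ⟨d, m', t', pre, post, rfl, hde, hs, ht, wlk_avoid hpre hmid.1,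
    wlk_avoid hpost hmid.2⟩

theorem neg_circle_contra {v u₂ : V} (hbal : Υ.BalancedAt A v)
    (hc : Υ.IsCircleWalk W₂) (hsgn : Υ.walkSign W₂ = -1)
    (hsub : ∀ d ∈ W₂, d.edge ∈ A) (hh : Υ.headSrc W₂ = some u₂)
    (hconn : Υ.conn A v u₂) : False := by
  have := hbal.2 W₂ hc hsub ⟨u₂, hh, hconn⟩
  rw [hsgn] at this
  exact absurd this (by decide)

/-- Either endpoint of a step over the link `e = ab` with a connected end. -/
theorem touch_step {a b : V} {d : DStep E} (hsh : Υ.shape e = .link a b)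
    (hconn : Υ.conn A v a ∨ Υ.conn A v b) (hde : d.edge = e)
    (hs : Υ.srcO d = some m) (ht : Υ.tgtO d = some t) :
    Υ.conn A v m ∨ Υ.conn A v t := by
  have hep := step_endpoints hs ht
  rw [hde, hsh] at hep
  rcases hep with h | h <;> cases h <;> tauto

theorem steps_edge_mem {Wu : UWalk V E} {C : Set E} (huC : uedges Wu = C)
    (hCsub : C ⊆ S) : ∀ d ∈ Wu.steps, d.edge ∈ S := fun d hd =>
  hCsub (by rw [← huC]; exact Or.inr (Or.inl (List.mem_map_of_mem (f := DStep.edge) hd)))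

/-- Steps never carry a half or loose edge. -/
theorem steps_not_half {u' : V} (hst : Υ.IsSteps W) (hd : e ∈ W.map DStep.edge)
    (hsh : Υ.shape e = .half u') : False := by
  obtain ⟨d, hdW, rfl⟩ := List.mem_map.1 hd
  obtain ⟨a, b, h⟩ := hst.1 d hdW
  rw [h] at hsh
  cases hsh

end GSGraph
end part5a
section part5b
namespace GSGraph
variable {V E G : Type*} [AddCommGroup G] {Υ : GSGraph V E G}
variable {A : Set E} {e : E} {u v w x m t : V} {W : List (DStep E)}

theorem nodup3 {α : Type*} {l₁ l₂ l₃ : List α} (h : (l₁ ++ l₂ ++ l₃).Nodup) :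
    (∀ y ∈ l₁, y ∉ l₂) ∧ (∀ y ∈ l₁, y ∉ l₃) ∧ (∀ y ∈ l₂, y ∉ l₃) := by
  simp only [List.nodup_append, List.Disjoint] at h
  refine ⟨fun y h1 h2 => ?_, fun y h1 h2 => ?_, fun y h1 h2 => ?_⟩
  · exact h.1.2.2 y h1 y h2 rfl
  · exact h.2.2 y (List.mem_append.2 (Or.inl h1)) y h2 rfl
  · exact h.2.2 y (List.mem_append.2 (Or.inr h1)) y h2 rfl

theorem conn_end_of_split {a b u₀ w₀ : V} {v : V} (hsh : Υ.shape e = .link a b)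
    (hab : Υ.conn A v a ∨ Υ.conn A v b)
    (h : Υ.Wlk (insert e A) u₀ W w₀) (hnd : (W.map DStep.edge).Nodup)
    (heW : e ∈ W.map DStep.edge) :
    Υ.conn A v u₀ ∨ Υ.conn A v w₀ := by
  obtain ⟨d, m, t, pre, post, rfl, hde, hs, ht, hpre, hpost⟩ := split_at_edge h hnd heW
  rcases touch_step hsh hab hde hs ht with hm | ht'
  · exact Or.inl (.trans hm (conn_symm hpre.conn))
  · exact Or.inr (.trans ht' hpost.conn)

/-- Main dissection: any sign circuit in `A ∪ {e}` through `e`, where `e`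
touches the balanced component of `v`, yields an `A`-walk between the ends of
`e` whose sign is the sign of `e`. -/
theorem dissect {v : V} (hbal : Υ.BalancedAt A v) {e : E} (he : e ∉ A)
    (htouch : (∃ u', Υ.shape e = .half u' ∧ Υ.conn A v u') ∨
      (∃ a b, Υ.shape e = .link a b ∧ (Υ.conn A v a ∨ Υ.conn A v b)))
    {C : Set E} (hCsub : C ⊆ insert e A) (hC : Υ.SignCircuit C) (heC : e ∈ C) :
    ∃ a b W', Υ.shape e = .link a b ∧ Υ.Wlk A a W' b ∧
      Υ.walkSign W' = Υ.sign e := by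
  rcases hC with ⟨g, hgl, rfl⟩ | ⟨Wu, hW, huC⟩
  · rcases heC with rfl
    rcases htouch with ⟨u', h, -⟩ | ⟨a, b, h, -⟩ <;> rw [hgl] at h <;> cases h
  · subst huC
    have hedge : ∀ d ∈ Wu.steps, d.edge ∈ insert e A :=
      steps_edge_mem rfl hCsub
    simp only [uedges, Set.mem_setOf_eq] at heC
    rcases hW with hpos | htype1 | htype2 | htype3
    · -- positive circle
      obtain ⟨hfh, hlh, hcirc, hsgn, hhead, hendV⟩ := hpos
      have heSteps : e ∈ Wu.steps.map DStep.edge := by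
        rcases heC with h | h | h
        · rw [hfh] at h; cases h
        · exact h
        · rw [hlh] at h; cases h
      obtain ⟨a, b, hsh, hab⟩ : ∃ a b, Υ.shape e = .link a b ∧
          (Υ.conn A v a ∨ Υ.conn A v b) := by
        rcases htouch with ⟨u', hsh', -⟩ | hlink
        · exact absurd (steps_not_half hcirc.2.1 heSteps hsh') id
        · exact hlink
      have hwlk : Υ.Wlk (insert e A) Wu.startV Wu.steps Wu.startV :=
        wlk_closed hcirc hhead hedge
      obtain ⟨d, m, t, pre, post, hWeq, hde, hs, ht, hpre, hpost⟩ :=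
        split_at_edge hwlk hcirc.2.2.2.1 heSteps
      have hglue : Υ.Wlk A t (post ++ pre) m := hpost.append hpre
      have hsign : Υ.walkSign (post ++ pre) = Υ.sign e := by
        have h1 : Υ.walkSign Wu.steps = 1 := hsgn
        rw [hWeq, walkSign_append, walkSign_cons, hde] at h1
        rw [walkSign_append]
        refine (units_eq_of_mul_eq_one ?_).symm
        calc Υ.sign e * (Υ.walkSign post * Υ.walkSign pre)
            = Υ.walkSign pre * (Υ.sign e * Υ.walkSign post) := by ac_rfl
          _ = 1 := h1
      have hep := step_endpoints hs ht
      rw [hde, hsh] at hep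
      rcases hep with hmt | hmt
      · injection hmt with h1 h2
        subst h1; subst h2
        exact ⟨_, _, revWalk (post ++ pre), hsh, hglue.rev,
          by rw [walkSign_rev, hsign]⟩
      · injection hmt with h1 h2
        subst h1; subst h2
        exact ⟨_, _, post ++ pre, hsh, hglue, hsign⟩
    · -- handcuff: two circles and a connecting path
      obtain ⟨W₁, P, W₂, u₁, u₂, hfh, hlh, hsteps, hIsSteps, hc₁, hsgn₁, hh₁,
        hc₂, hsgn₂, hh₂, hP, hPft, hstartV, hendV, hmeet1, hmeet2, hnd⟩ := htype1
      exfalso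
      have heSteps : e ∈ Wu.steps.map DStep.edge := by
        rcases heC with h | h | h
        · rw [hfh] at h; cases h
        · exact h
        · rw [hlh] at h; cases h
      obtain ⟨a, b, hsh, hab⟩ : ∃ a b, Υ.shape e = .link a b ∧
          (Υ.conn A v a ∨ Υ.conn A v b) := by
        rcases htouch with ⟨u', hsh', -⟩ | hlink
        · exact absurd (steps_not_half hIsSteps heSteps hsh') id
        · exact hlink
      have hmem : e ∈ W₁.map DStep.edge ∨ e ∈ P.map DStep.edge ∨
          e ∈ W₂.map DStep.edge := by
        rw [hsteps] at heSteps
        simp only [List.map_append, List.mem_append, revWalk_edges,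
          List.mem_reverse] at heSteps
        rcases heSteps with ((h | h) | h) | h
        exacts [Or.inl h, Or.inr (Or.inl h), Or.inr (Or.inr h), Or.inr (Or.inl h)]
      have hedge₁ : ∀ d ∈ W₁, d.edge ∈ insert e A := fun d hd =>
        hedge d (by rw [hsteps]; simp [hd])
      have hedge₂ : ∀ d ∈ W₂, d.edge ∈ insert e A := fun d hd =>
        hedge d (by rw [hsteps]; simp [hd])
      have hedgeP : ∀ d ∈ P, d.edge ∈ insert e A := fun d hd =>
        hedge d (by rw [hsteps]; simp [hd])
      have hnd3 := nodup3 (by simpa using hnd)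
      -- A-versions when e avoids the piece
      have hW₁A : e ∉ W₁.map DStep.edge → ∀ d ∈ W₁, d.edge ∈ A := fun hno d hd =>
        (Set.mem_insert_iff.1 (hedge₁ d hd)).resolve_left
          (fun h => hno (h ▸ List.mem_map_of_mem (f := DStep.edge) hd))
      have hW₂A : e ∉ W₂.map DStep.edge → ∀ d ∈ W₂, d.edge ∈ A := fun hno d hd =>
        (Set.mem_insert_iff.1 (hedge₂ d hd)).resolve_left
          (fun h => hno (h ▸ List.mem_map_of_mem (f := DStep.edge) hd))
      have hPA : e ∉ P.map DStep.edge → ∀ d ∈ P, d.edge ∈ A := fun hno d hd =>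
        (Set.mem_insert_iff.1 (hedgeP d hd)).resolve_left
          (fun h => hno (h ▸ List.mem_map_of_mem (f := DStep.edge) hd))
      -- contradiction makers
      have hkill₁ : Υ.conn A v u₁ → e ∉ W₁.map DStep.edge → False := fun hco hno =>
        neg_circle_contra hbal hc₁ hsgn₁ (hW₁A hno) hh₁ hco
      have hkill₂ : Υ.conn A v u₂ → e ∉ W₂.map DStep.edge → False := fun hco hno =>
        neg_circle_contra hbal hc₂ hsgn₂ (hW₂A hno) hh₂ hco
      rcases hmem with h1 | h2 | h3
      · -- e on the first circle
        have heP : e ∉ P.map DStep.edge := fun h => hnd3.1 e h1 h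
        have heW₂ : e ∉ W₂.map DStep.edge := fun h => hnd3.2.1 e h1 h
        have hwlk₁ : Υ.Wlk (insert e A) u₁ W₁ u₁ := wlk_closed hc₁ hh₁ hedge₁
        have hconn₁ : Υ.conn A v u₁ := by
          rcases conn_end_of_split hsh hab hwlk₁ hc₁.2.2.2.1 h1 with h | h <;> exact h
        have hPwlk : Υ.Wlk A u₁ P u₂ := wlk_of_isSteps (hPA heP) hP.1 hPft
        exact hkill₂ (.trans hconn₁ hPwlk.conn) heW₂
      · -- e on the path
        have heW₁ : e ∉ W₁.map DStep.edge := fun h => hnd3.1 e h h2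
        have heW₂ : e ∉ W₂.map DStep.edge := fun h => hnd3.2.2 e h2 h
        have hPwlk : Υ.Wlk (insert e A) u₁ P u₂ := wlk_of_isSteps hedgeP hP.1 hPft
        rcases conn_end_of_split hsh hab hPwlk hP.2.1 h2 with h | h
        · exact hkill₁ h heW₁
        · exact hkill₂ h heW₂
      · -- e on the second circle
        have heP : e ∉ P.map DStep.edge := fun h => hnd3.2.2 e h h3
        have heW₁ : e ∉ W₁.map DStep.edge := fun h => hnd3.2.1 e h h3
        have hwlk₂ : Υ.Wlk (insert e A) u₂ W₂ u₂ := wlk_closed hc₂ hh₂ hedge₂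
        have hconn₂ : Υ.conn A v u₂ := by
          rcases conn_end_of_split hsh hab hwlk₂ hc₂.2.2.2.1 h3 with h | h <;> exact h
        have hPwlk : Υ.Wlk A u₁ P u₂ := wlk_of_isSteps (hPA heP) hP.1 hPft
        exact hkill₁ (.trans hconn₂ (conn_symm hPwlk.conn)) heW₁
    · -- handcuff: half edge plus circle
      obtain ⟨e₁, P, W₂, u₂, hfh, hlh, hsh₁, hendV, -, hsteps, hIsSteps, hc₂,
        hsgn₂, hh₂, hP, hPft, hmeet, hPstart, hnd⟩ := htype2
      exfalso
      have hedgeP : ∀ d ∈ P, d.edge ∈ insert e A := fun d hd =>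
        hedge d (by rw [hsteps]; simp [hd])
      have hedge₂ : ∀ d ∈ W₂, d.edge ∈ insert e A := fun d hd =>
        hedge d (by rw [hsteps]; simp [hd])
      have hPA : e ∉ P.map DStep.edge → ∀ d ∈ P, d.edge ∈ A := fun hno d hd =>
        (Set.mem_insert_iff.1 (hedgeP d hd)).resolve_left
          (fun h => hno (h ▸ List.mem_map_of_mem (f := DStep.edge) hd))
      have hW₂A : e ∉ W₂.map DStep.edge → ∀ d ∈ W₂, d.edge ∈ A := fun hno d hd =>
        (Set.mem_insert_iff.1 (hedge₂ d hd)).resolve_left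
          (fun h => hno (h ▸ List.mem_map_of_mem (f := DStep.edge) hd))
      have hkill₂ : Υ.conn A v u₂ → e ∉ W₂.map DStep.edge → False := fun hco hno =>
        neg_circle_contra hbal hc₂ hsgn₂ (hW₂A hno) hh₂ hco
      have hkillHalf : Υ.conn A v Wu.startV → e₁ ∈ A → False := fun hco h1A =>
        hbal.1 e₁ h1A Wu.startV hsh₁ hco
      have hnd' := List.nodup_append.1 (by simpa using hnd)
      by_cases he1 : e = e₁
      · -- e is the half edge of the handcuff
        subst he1
        obtain ⟨u', hsh', hconn'⟩ : ∃ u', Υ.shape e = .half u' ∧ Υ.conn A v u' := by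
          rcases htouch with h | ⟨a, b, hsh', -⟩
          · exact h
          · rw [hsh₁] at hsh'; cases hsh'
        have hu' : u' = Wu.startV := by rw [hsh₁] at hsh'; cases hsh'; rfl
        subst hu'
        have heSteps : e ∉ Wu.steps.map DStep.edge := fun h =>
          steps_not_half hIsSteps h hsh₁
        have hPe : e ∉ P.map DStep.edge := fun h =>
          heSteps (by rw [hsteps]; simp [h])
        have heW₂ : e ∉ W₂.map DStep.edge := fun h =>
          heSteps (by rw [hsteps]; simp [h])
        have hPwlk : Υ.Wlk A Wu.startV P u₂ := wlk_of_isSteps (hPA hPe) hP.1 hPft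
        exact hkill₂ (.trans hconn' hPwlk.conn) heW₂
      · -- e is a link on the path or the circle
        have he₁A : e₁ ∈ A := by
          have : e₁ ∈ insert e A := hCsub (Or.inl hfh)
          exact (Set.mem_insert_iff.1 this).resolve_left (fun h => he1 h.symm)
        have heSteps : e ∈ Wu.steps.map DStep.edge := by
          rcases heC with h | h | h
          · rw [hfh] at h; exact absurd (Option.some_injective _ h).symm he1
          · exact h
          · rw [hlh] at h; exact absurd (Option.some_injective _ h).symm he1
        obtain ⟨a, b, hsh, hab⟩ : ∃ a b, Υ.shape e = .link a b ∧
            (Υ.conn A v a ∨ Υ.conn A v b) := by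
          rcases htouch with ⟨u', hsh', -⟩ | hlink
          · exact absurd (steps_not_half hIsSteps heSteps hsh') id
          · exact hlink
        have hmem : e ∈ P.map DStep.edge ∨ e ∈ W₂.map DStep.edge := by
          rw [hsteps] at heSteps
          simp only [List.map_append, List.mem_append, revWalk_edges,
            List.mem_reverse] at heSteps
          rcases heSteps with (h | h) | h
          exacts [Or.inl h, Or.inr h, Or.inl h]
        rcases hmem with h2 | h3
        · have heW₂ : e ∉ W₂.map DStep.edge := fun h => hnd'.2.2 e h2 e h rfl
          have hPwlk : Υ.Wlk (insert e A) Wu.startV P u₂ :=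
            wlk_of_isSteps hedgeP hP.1 hPft
          rcases conn_end_of_split hsh hab hPwlk hP.2.1 h2 with h | h
          · exact hkillHalf h he₁A
          · exact hkill₂ h heW₂
        · have hPe : e ∉ P.map DStep.edge := fun h => hnd'.2.2 e h e h3 rfl
          have hwlk₂ : Υ.Wlk (insert e A) u₂ W₂ u₂ := wlk_closed hc₂ hh₂ hedge₂
          have hconn₂ : Υ.conn A v u₂ := by
            rcases conn_end_of_split hsh hab hwlk₂ hc₂.2.2.2.1 h3 with h | h <;> exact h
          have hPwlk : Υ.Wlk A Wu.startV P u₂ := wlk_of_isSteps (hPA hPe) hP.1 hPft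
          exact hkillHalf (.trans hconn₂ (conn_symm hPwlk.conn)) he₁A
    · -- handcuff: two half edges joined by a path
      obtain ⟨e₁, e₂, hfh, hlh, hne12, hsh₁, hsh₂, -, -, hpath, hft⟩ := htype3
      exfalso
      have hedgeS : ∀ d ∈ Wu.steps, d.edge ∈ insert e A := hedge
      have hkill₁ : Υ.conn A v Wu.startV → e₁ ∈ A → False := fun hco h1A =>
        hbal.1 e₁ h1A Wu.startV hsh₁ hco
      have hkill₂ : Υ.conn A v Wu.endV → e₂ ∈ A → False := fun hco h2A =>
        hbal.1 e₂ h2A Wu.endV hsh₂ hco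
      have hSA : e ∉ Wu.steps.map DStep.edge → ∀ d ∈ Wu.steps, d.edge ∈ A :=
        fun hno d hd => (Set.mem_insert_iff.1 (hedgeS d hd)).resolve_left
          (fun h => hno (h ▸ List.mem_map_of_mem (f := DStep.edge) hd))
      by_cases heS : e ∈ Wu.steps.map DStep.edge
      · -- e is a link on the path
        obtain ⟨a, b, hsh, hab⟩ : ∃ a b, Υ.shape e = .link a b ∧
            (Υ.conn A v a ∨ Υ.conn A v b) := by
          rcases htouch with ⟨u', hsh', -⟩ | hlink
          · exact absurd (steps_not_half hpath.1 heS hsh') id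
          · exact hlink
        have he1 : e₁ ∈ A := by
          have h1C : e₁ ∈ insert e A := hCsub (Or.inl hfh)
          refine (Set.mem_insert_iff.1 h1C).resolve_left (fun h => ?_)
          subst h
          exact steps_not_half hpath.1 heS hsh₁
        have he2 : e₂ ∈ A := by
          have h2C : e₂ ∈ insert e A := hCsub (Or.inr (Or.inr hlh))
          refine (Set.mem_insert_iff.1 h2C).resolve_left (fun h => ?_)
          subst h
          exact steps_not_half hpath.1 heS hsh₂
        have hwlk : Υ.Wlk (insert e A) Wu.startV Wu.steps Wu.endV :=
          wlk_of_isSteps hedgeS hpath.1 hft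
        rcases conn_end_of_split hsh hab hwlk hpath.2.1 heS with h | h
        · exact hkill₁ h he1
        · exact hkill₂ h he2
      · -- e is one of the two half edges
        have heC' : e = e₁ ∨ e = e₂ := by
          rcases heC with h | h | h
          · rw [hfh] at h; exact Or.inl (Option.some_injective _ h).symm
          · exact absurd h heS
          · rw [hlh] at h; exact Or.inr (Option.some_injective _ h).symm
        have hwlkA : Υ.Wlk A Wu.startV Wu.steps Wu.endV :=
          wlk_of_isSteps (hSA heS) hpath.1 hft
        rcases heC' with rfl | rfl
        · obtain ⟨u', hsh', hconn'⟩ : ∃ u', Υ.shape e = .half u' ∧ Υ.conn A v u' := by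
            rcases htouch with h | ⟨a, b, hsh', -⟩
            · exact h
            · rw [hsh₁] at hsh'; cases hsh'
          have hu' : u' = Wu.startV := by rw [hsh₁] at hsh'; cases hsh'; rfl
          subst hu'
          have he2 : e₂ ∈ A := by
            have h2C : e₂ ∈ insert e A := hCsub (Or.inr (Or.inr hlh))
            exact (Set.mem_insert_iff.1 h2C).resolve_left (fun h => hne12 h.symm)
          exact hkill₂ (.trans hconn' hwlkA.conn) he2
        · obtain ⟨u', hsh', hconn'⟩ : ∃ u', Υ.shape e = .half u' ∧ Υ.conn A v u' := by
            rcases htouch with h | ⟨a, b, hsh', -⟩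
            · exact h
            · rw [hsh₂] at hsh'; cases hsh'
          have hu' : u' = Wu.endV := by rw [hsh₂] at hsh'; cases hsh'; rfl
          subst hu'
          have he1 : e₁ ∈ A := by
            have h1C : e₁ ∈ insert e A := hCsub (Or.inl hfh)
            exact (Set.mem_insert_iff.1 h1C).resolve_left (fun h => hne12 h)
          exact hkill₁ (.trans hconn' (conn_symm hwlkA.conn)) he1

end GSGraph
end part5b
section part6
namespace GSGraph
variable {V E G : Type*} [AddCommGroup G] {Υ : GSGraph V E G}
variable {A S T : Set E} {e : E} {u v w : V}

theorem hyper_mono (h : Υ.Hyperbalanced T) (hST : S ⊆ T) : Υ.Hyperbalanced S :=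
  fun C hC => h C (hC.trans hST)

theorem insert_not_hyper (hmax : ∀ B, Υ.Hyperbalanced B → A ⊆ B → B = A)
    (he : e ∉ A) : ¬ Υ.Hyperbalanced (insert e A) := fun h =>
  he (by rw [← hmax _ h (Set.subset_insert _ _)]; exact Set.mem_insert _ _)

theorem sub_A_of_not_mem {C : Set E} (hC : C ⊆ insert e A) (heC : e ∉ C) :
    C ⊆ A := fun x hx =>
  (Set.mem_insert_iff.1 (hC hx)).resolve_left (fun h => heC (h ▸ hx))

/-- No half edge outside `A` is attached to the balanced component of `v`. -/
theorem no_new_half (hA : Υ.Hyperbalanced A)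
    (hmax : ∀ B, Υ.Hyperbalanced B → A ⊆ B → B = A)
    (hbal : Υ.BalancedAt A v) {u' : V} (he : e ∉ A)
    (hsh : Υ.shape e = .half u') (hconn : Υ.conn A v u') : False := by
  apply insert_not_hyper hmax he
  intro C hC hcirc
  by_cases heC : e ∈ C
  · exfalso
    obtain ⟨a, b, W', hsh', -, -⟩ :=
      dissect hbal he (Or.inl ⟨u', hsh, hconn⟩) hC hcirc heC
    rw [hsh] at hsh'
    cases hsh'
  · exact hA C (sub_A_of_not_mem hC heC) hcirc

/-- Any link outside `A` touching the balanced component of `v` has its two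
ends `A`-connected. -/
theorem link_conn (hA : Υ.Hyperbalanced A)
    (hmax : ∀ B, Υ.Hyperbalanced B → A ⊆ B → B = A)
    (hbal : Υ.BalancedAt A v) {a b : V} (he : e ∉ A)
    (hsh : Υ.shape e = .link a b) (hab : Υ.conn A v a ∨ Υ.conn A v b) :
    Υ.conn A a b := by
  by_contra hnc
  apply insert_not_hyper hmax he
  intro C hC hcirc
  by_cases heC : e ∈ C
  · exfalso
    obtain ⟨a', b', W', hsh', hwlk, -⟩ :=
      dissect hbal he (Or.inr ⟨a, b, hsh, hab⟩) hC hcirc heC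
    rw [hsh] at hsh'
    injection hsh' with h1 h2
    subst h1; subst h2
    exact hnc hwlk.conn
  · exact hA C (sub_A_of_not_mem hC heC) hcirc

/-- A chord of the balanced component of `v` spans an `A`-walk of its own
sign. -/
theorem chord_walk (hA : Υ.Hyperbalanced A)
    (hmax : ∀ B, Υ.Hyperbalanced B → A ⊆ B → B = A)
    (hbal : Υ.BalancedAt A v) {a b : V} (he : e ∉ A)
    (hsh : Υ.shape e = .link a b) (hab : Υ.conn A v a ∨ Υ.conn A v b) :
    ∃ W', Υ.Wlk A a W' b ∧ Υ.walkSign W' = Υ.sign e := by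
  have hnh := insert_not_hyper hmax he
  rw [GSGraph.Hyperbalanced] at hnh
  push_neg at hnh
  obtain ⟨C, hC, hcirc, hneut⟩ := hnh
  have heC : e ∈ C := by
    by_contra h
    exact hneut (hA C (sub_A_of_not_mem hC h) hcirc)
  obtain ⟨a', b', W', hsh', hwlk, hsgn⟩ :=
    dissect hbal he (Or.inr ⟨a, b, hsh, hab⟩) hC hcirc heC
  rw [hsh] at hsh'
  injection hsh' with h1 h2
  subst h1; subst h2
  exact ⟨W', hwlk, hsgn⟩

/-- Connectivity in any `B ⊇ A` collapses to `A`-connectivity from a balanced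
base vertex. -/
theorem conn_collapse (hA : Υ.Hyperbalanced A)
    (hmax : ∀ B, Υ.Hyperbalanced B → A ⊆ B → B = A)
    (hbal : Υ.BalancedAt A v) {B : Set E} (hB : A ⊆ B) {y : V}
    (h : Υ.conn B v y) : Υ.conn A v y := by
  induction h with
  | refl => exact .refl
  | tail hprev hj ih =>
      rename_i b c
      obtain ⟨g, hgB, hsh | hsh⟩ := hj
      · by_cases hgA : g ∈ A
        · exact ih.tail ⟨g, hgA, Or.inl hsh⟩
        · exact .trans ih (link_conn hA hmax hbal hgA hsh (Or.inl ih))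
      · by_cases hgA : g ∈ A
        · exact ih.tail ⟨g, hgA, Or.inr hsh⟩
        · exact .trans ih (conn_symm (link_conn hA hmax hbal hgA hsh (Or.inr ih)))

theorem bal_anti (hST : S ⊆ T) (h : Υ.BalancedAt T v) : Υ.BalancedAt S v := by
  constructor
  · intro g hgS u' hsh hc
    exact h.1 g (hST hgS) u' hsh (conn_mono hST hc)
  · rintro W hc hsub ⟨u₀, hh, hc'⟩
    exact h.2 W hc (fun d hd => hST (hsub d hd)) ⟨u₀, hh, conn_mono hST hc'⟩

/-- Core: a balanced vertex of `A` is balanced in the whole graph. -/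
theorem bal_univ (hA : Υ.Hyperbalanced A)
    (hmax : ∀ B, Υ.Hyperbalanced B → A ⊆ B → B = A)
    (hbal : Υ.BalancedAt A v) : Υ.BalancedAt (Set.univ : Set E) v := by
  have hred : ∀ {y : V}, Υ.conn Set.univ v y → Υ.conn A v y := fun h =>
    conn_collapse hA hmax hbal (Set.subset_univ A) h
  constructor
  · intro g hg u' hsh hconnu
    by_cases hgA : g ∈ A
    · exact hbal.1 g hgA u' hsh (hred hconnu)
    · exact absurd (no_new_half hA hmax hbal hgA hsh (hred hconnu)) id
  · rintro W hc hsub ⟨u₀, hh, hconnu⟩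
    have hwlk : Υ.Wlk (Set.univ : Set E) u₀ W u₀ :=
      wlk_closed hc hh (fun d _ => Set.mem_univ _)
    have hζ : ∀ d ∈ W, ∀ c c', Υ.srcO d = some c → Υ.tgtO d = some c' →
        Υ.sign d.edge = Υ.zeta A v c * Υ.zeta A v c' := by
      intro d hd c c' hs ht
      have hconnc : Υ.conn A v c :=
        hred (.trans hconnu (hwlk.verts_conn d hd c (Or.inl hs)))
      obtain ⟨Wc, hWc⟩ := conn_wlk hconnc
      have hstep : ∃ W', Υ.Wlk A c W' c' ∧ Υ.walkSign W' = Υ.sign d.edge := by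
        by_cases hgA : d.edge ∈ A
        · exact ⟨[d], .cons hgA hs ht (.nil _), by
            rw [walkSign_cons, walkSign_nil, mul_one]⟩
        · rcases step_endpoints hs ht with hsh | hsh
          · exact chord_walk hA hmax hbal hgA hsh (Or.inl hconnc)
          · obtain ⟨W', hw, hsgn⟩ :=
              chord_walk hA hmax hbal hgA hsh (Or.inr hconnc)
            exact ⟨revWalk W', hw.rev, by rw [walkSign_rev, hsgn]⟩
      obtain ⟨W', hw', hsgn'⟩ := hstep
      have h1 : Υ.zeta A v c = Υ.walkSign Wc := zeta_eq hbal hWc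
      have h2 : Υ.zeta A v c' = Υ.walkSign (Wc ++ W') :=
        zeta_eq hbal (hWc.append hw')
      rw [walkSign_append, ← h1, hsgn'] at h2
      rw [h2, ← mul_assoc, Int.units_mul_self, one_mul]
    have := wlk_sign_potential hwlk hζ
    rw [this, Int.units_mul_self]

/-- The balanced components of any `B ⊇ A` coincide with those of `A`. -/
theorem comp_bal_iff (hA : Υ.Hyperbalanced A)
    (hmax : ∀ B, Υ.Hyperbalanced B → A ⊆ B → B = A)
    {B : Set E} (hB : A ⊆ B) (X : Set V) :
    (∃ w, X = Υ.comp B w ∧ Υ.BalancedAt B w) ↔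
    (∃ w, X = Υ.comp A w ∧ Υ.BalancedAt A w) := by
  have hcomp : ∀ w, Υ.BalancedAt A w → Υ.comp B w = Υ.comp A w := by
    intro w hbw
    ext y
    constructor
    · exact fun h => conn_collapse hA hmax hbw hB h
    · exact fun h => conn_mono hB h
  constructor
  · rintro ⟨w, rfl, hbw⟩
    have hbA : Υ.BalancedAt A w := bal_anti hB hbw
    exact ⟨w, hcomp w hbA, hbA⟩
  · rintro ⟨w, rfl, hbw⟩
    refine ⟨w, (hcomp w hbw).symm, bal_anti (Set.subset_univ B) (bal_univ hA hmax hbw)⟩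

theorem bBal_eq (hA : Υ.Hyperbalanced A)
    (hmax : ∀ B, Υ.Hyperbalanced B → A ⊆ B → B = A)
    {B : Set E} (hB : A ⊆ B) : Υ.bBal B = Υ.bBal A := by
  have hpred : (fun X : Set V => ∃ w, X = Υ.comp B w ∧ Υ.BalancedAt B w) =
      (fun X : Set V => ∃ w, X = Υ.comp A w ∧ Υ.BalancedAt A w) :=
    funext fun X => propext (comp_bal_iff hA hmax hB X)
  rw [GSGraph.bBal, GSGraph.bBal, hpred]

end GSGraph
end part6
/-- If `Υ` is hyperfrustrated, every maximal hyperbalanced edge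
set `A` is a coatom of the lattice of flats of `M(Υ)`, with
`b_Σ(A) = b_Σ(E)` and `rk(A) = rk(E) − 1 = n − b_Σ(E)`.  (A coatom is a flat
of rank `rk(E) − 1` such that adjoining any outside edge closes to all of
`E`.) -/
theorem maximal_hyperbalanced_is_coatom
    {V E G : Type*} [AddCommGroup G] [Fintype V] [Fintype E]
    (Υ : GSGraph V E G) (hΥ : Υ.Proper)
    (hfrust : ¬ Υ.Hyperbalanced (Set.univ : Set E))
    (A : Set E) (hA : Υ.Hyperbalanced A)
    (hmax : ∀ B, Υ.Hyperbalanced B → A ⊆ B → B = A) :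
    Υ.bBal A = Υ.bBal (Set.univ : Set E) ∧
    Υ.rk A + 1 = Υ.rk (Set.univ : Set E) ∧
    Υ.rk A = Fintype.card V - Υ.bBal (Set.univ : Set E) ∧
    Υ.cl A = A ∧
    (∀ e ∉ A, Υ.cl (insert e A) = Set.univ) := by
  classical
  have key : ∀ B : Set E, A ⊆ B → Υ.bBal B = Υ.bBal A :=
    fun B hB => GSGraph.bBal_eq hA hmax hB
  have hbAu : Υ.bBal A = Υ.bBal (Set.univ : Set E) :=
    (key _ (Set.subset_univ A)).symm
  have hδA : Υ.delta A = 0 := by simp [GSGraph.delta, hA]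
  have hδu : Υ.delta (Set.univ : Set E) = 1 := by simp [GSGraph.delta, hfrust]
  have hrkA : Υ.rk A = Fintype.card V - Υ.bBal A := by
    simp [GSGraph.rk, hδA]
  have hrkU : Υ.rk (Set.univ : Set E) = Fintype.card V - Υ.bBal A + 1 := by
    rw [GSGraph.rk, hδu, ← hbAu]
  refine ⟨hbAu, ?_, ?_, ?_, ?_⟩
  · rw [hrkA, hrkU]
  · rw [hrkA, hbAu]
  · ext e
    simp only [GSGraph.cl, Set.mem_setOf_eq]
    constructor
    · intro h
      by_contra heA
      have h1 : Υ.delta (insert e A) = 1 := by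
        simp [GSGraph.delta, GSGraph.insert_not_hyper hmax heA]
      have h2 : Υ.bBal (insert e A) = Υ.bBal A := key _ (Set.subset_insert _ _)
      rw [GSGraph.rk, GSGraph.rk, h1, h2, hδA] at h
      omega
    · intro h
      rw [Set.insert_eq_self.2 h]
  · intro e heA
    apply Set.eq_univ_of_forall
    intro f
    simp only [GSGraph.cl, Set.mem_setOf_eq]
    by_cases hf : f ∈ insert e A
    · rw [Set.insert_eq_self.2 hf]
    · have hss : insert e A ⊆ insert f (insert e A) := Set.subset_insert _ _
      have h1 : Υ.delta (insert e A) = 1 := by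
        simp [GSGraph.delta, GSGraph.insert_not_hyper hmax heA]
      have h2 : Υ.delta (insert f (insert e A)) = 1 := by
        have hnh : ¬ Υ.Hyperbalanced (insert f (insert e A)) := fun h =>
          GSGraph.insert_not_hyper hmax heA (GSGraph.hyper_mono h hss)
        simp [GSGraph.delta, hnh]
      have h3 : Υ.bBal (insert e A) = Υ.bBal A := key _ (Set.subset_insert _ _)
      have h4 : Υ.bBal (insert f (insert e A)) = Υ.bBal A :=
        key _ ((Set.subset_insert _ _).trans hss)
      rw [GSGraph.rk, GSGraph.rk, h1, h2, h3, h4]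

end GSG
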